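/- For every integer n > 0, e_3Q(n) = (1/6) ( n^3 * Q(n) - Σ_{k=1}^{n} ( 3n * σ_{2,odd}(k) - 2 * σ_{3,odd}(k) ) * Q(n-k) ). -/

import Mathlib

open Finset

/-- The finset of partitions of `n` into odd parts. -/
def oddPartitions (n : ℕ) : Finset (Nat.Partition n) :=
  Finset.univ.filter fun π => ∀ i ∈ π.parts, Odd i

/-- `Q(n)`, the number of partitions of `n` into odd parts. -/
def Qodd (n : ℕ) : ℕ := (oddPartitions n).card

/-- `e_j Q(n)`, the sum of the `j`-th elementary symmetric polynomial evaluated at the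
parts over all partitions of `n` into odd parts. -/
def ejQ (j n : ℕ) : ℕ := ∑ π ∈ oddPartitions n, π.parts.esymm j

/-- `σ_{j,odd}(n)`, the sum of `d^j` over the odd divisors `d` of `n`. -/
def sigmaOdd (j n : ℕ) : ℕ := ∑ d ∈ n.divisors.filter Odd, d ^ j

section Aux
variable {R : Type*} [CommRing R]

lemma esymm_cons (a : R) (s : Multiset R) (k : ℕ) :
    (a ::ₘ s).esymm (k+1) = s.esymm (k+1) + a * s.esymm k := by
  simp only [Multiset.esymm, Multiset.powersetCard_cons, Multiset.map_add, Multiset.sum_add,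
    Multiset.map_map, Function.comp_def, Multiset.prod_cons]
  rw [← Multiset.sum_map_mul_left]

lemma esymm_one' (s : Multiset R) : s.esymm 1 = s.sum := by
  simp [Multiset.esymm, Multiset.powersetCard_one, Multiset.map_map, Function.comp_def]

lemma esymm_cons2 (a : R) (s : Multiset R) :
    (a ::ₘ s).esymm 2 = s.esymm 2 + a * s.sum := by
  rw [show (a ::ₘ s).esymm 2 = (a ::ₘ s).esymm (1+1) from rfl, esymm_cons, esymm_one']

lemma esymm_cons3 (a : R) (s : Multiset R) :
    (a ::ₘ s).esymm 3 = s.esymm 3 + a * s.esymm 2 := by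
  rw [show (a ::ₘ s).esymm 3 = (a ::ₘ s).esymm (2+1) from rfl, esymm_cons]

lemma newton2 (s : Multiset R) :
    2 * s.esymm 2 + (s.map (·^2)).sum = s.sum ^ 2 := by
  induction s using Multiset.induction with
  | empty => simp [Multiset.esymm, Multiset.powersetCard_eq_empty 2 (s := (0 : Multiset R)) (by simp)]
  | cons a s ih =>
    rw [esymm_cons2, Multiset.map_cons, Multiset.sum_cons, Multiset.sum_cons]
    linear_combination ih

lemma newton3 (s : Multiset R) :
    6 * s.esymm 3 + 3 * s.sum * (s.map (·^2)).sum
      = s.sum ^ 3 + 2 * (s.map (·^3)).sum := by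
  induction s using Multiset.induction with
  | empty => simp [Multiset.esymm, Multiset.powersetCard_eq_empty 3 (s := (0 : Multiset R)) (by simp)]
  | cons a s ih =>
    have h2 := newton2 s
    rw [esymm_cons3, Multiset.map_cons, Multiset.sum_cons, Multiset.map_cons,
      Multiset.sum_cons, Multiset.sum_cons]
    linear_combination ih + 3 * a * h2

lemma esymm_cast (s : Multiset ℕ) (k : ℕ) :
    ((s.esymm k : ℕ) : ℚ) = (s.map (Nat.cast : ℕ → ℚ)).esymm k := by
  simp only [Multiset.esymm, Multiset.powersetCard_map, Multiset.map_map, Function.comp_def,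
    Nat.cast_multiset_sum, Nat.cast_multiset_prod]

lemma mem_oddPartitions {n : ℕ} {π : Nat.Partition n} :
    π ∈ oddPartitions n ↔ ∀ i ∈ π.parts, Odd i := by simp [oddPartitions]

lemma card_filter_count (n d t : ℕ) (hd : Odd d) (hdt : t * d ≤ n) :
    ((oddPartitions n).filter (fun π => t ≤ π.parts.count d)).card = Qodd (n - t * d) := by
  have hd0 : 0 < d := hd.pos
  refine Finset.card_bij'
    (i := fun π hπ => ⟨π.parts - Multiset.replicate t d, ?_, ?_⟩)
    (j := fun μ hμ => ⟨μ.parts + Multiset.replicate t d, ?_, ?_⟩) ?_ ?_ ?_ ?_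
  · intro i hi
    exact π.parts_pos (Multiset.mem_of_le (tsub_le_self) hi)
  · have hrep : Multiset.replicate t d ≤ π.parts := by
      rw [Finset.mem_filter] at hπ
      exact Multiset.le_count_iff_replicate_le.mp hπ.2
    have h1 : (π.parts - Multiset.replicate t d) + Multiset.replicate t d = π.parts :=
      tsub_add_cancel_of_le hrep
    have h2 := congrArg Multiset.sum h1
    rw [Multiset.sum_add, Multiset.sum_replicate, smul_eq_mul, π.parts_sum] at h2
    omega
  · intro i hi
    rcases Multiset.mem_add.mp hi with h | h
    · exact μ.parts_pos h
    · rw [Multiset.eq_of_mem_replicate h]; exact hd0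
  · rw [Multiset.sum_add, Multiset.sum_replicate, smul_eq_mul, μ.parts_sum]
    omega
  · intro π hπ
    rw [Finset.mem_filter] at hπ
    rw [mem_oddPartitions]
    intro i hi
    exact mem_oddPartitions.mp hπ.1 i (Multiset.mem_of_le tsub_le_self hi)
  · intro μ hμ
    rw [Finset.mem_filter]
    refine ⟨mem_oddPartitions.mpr fun i hi => ?_, ?_⟩
    · rcases Multiset.mem_add.mp hi with h | h
      · exact mem_oddPartitions.mp hμ i h
      · rw [Multiset.eq_of_mem_replicate h]; exact hd
    · simp [Multiset.count_add, Multiset.count_replicate]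
  · intro π hπ
    rw [Finset.mem_filter] at hπ
    ext1
    exact tsub_add_cancel_of_le (Multiset.le_count_iff_replicate_le.mp hπ.2)
  · intro μ hμ
    ext1
    exact add_tsub_cancel_right _ _

lemma count_mul_le (n d : ℕ) (π : Nat.Partition n) : π.parts.count d * d ≤ n := by
  have h : Multiset.replicate (π.parts.count d) d ≤ π.parts :=
    Multiset.le_count_iff_replicate_le.mp le_rfl
  have h1 := congrArg Multiset.sum (tsub_add_cancel_of_le h)
  rw [Multiset.sum_add, Multiset.sum_replicate, smul_eq_mul, π.parts_sum] at h1
  omega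

lemma parts_le (n i : ℕ) (π : Nat.Partition n) (hi : i ∈ π.parts) : i ≤ n := by
  have := Multiset.single_le_sum (fun x _ => Nat.zero_le x) i hi
  rwa [π.parts_sum] at this



-- Step 1: per-partition sum over Icc
lemma step1 (j n : ℕ) (π : Nat.Partition n) :
    (π.parts.map (· ^ j)).sum = ∑ d ∈ Icc 1 n, π.parts.count d * d ^ j := by
  rw [Finset.sum_multiset_map_count]
  simp only [smul_eq_mul]
  refine Finset.sum_subset ?_ ?_
  · intro i hi
    rw [Multiset.mem_toFinset] at hi
    rw [mem_Icc]
    exact ⟨π.parts_pos hi, parts_le n i π hi⟩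
  · intro i _ hi
    rw [Multiset.mem_toFinset] at hi
    rw [Multiset.count_eq_zero_of_notMem hi, zero_mul]

-- count as a sum of indicator over t
lemma step2 (n c : ℕ) (hc : c ≤ n) : c = ∑ t ∈ Icc 1 n, if t ≤ c then 1 else 0 := by
  rw [← Finset.card_filter]
  have : (Icc 1 n).filter (fun t => t ≤ c) = Icc 1 c := by
    ext x; simp only [mem_filter, mem_Icc]; omega
  rw [this, Nat.card_Icc]; omega

lemma sum_count_eq (n d : ℕ) (hd : Odd d) :
    ∑ π ∈ oddPartitions n, π.parts.count d
      = ∑ t ∈ (Icc 1 n).filter (fun t => t * d ≤ n), Qodd (n - t * d) := by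
  have hd0 : 0 < d := hd.pos
  have key : ∑ π ∈ oddPartitions n, π.parts.count d
      = ∑ t ∈ Icc 1 n, ((oddPartitions n).filter (fun π => t ≤ π.parts.count d)).card := by
    simp only [Finset.card_filter]
    rw [Finset.sum_comm]
    refine Finset.sum_congr rfl fun π _ => ?_
    refine step2 n _ ?_
    have := count_mul_le n d π
    nlinarith
  rw [key]
  have h2 : ∑ t ∈ Icc 1 n, ((oddPartitions n).filter (fun π => t ≤ π.parts.count d)).card
      = ∑ t ∈ (Icc 1 n).filter (fun t => t * d ≤ n),
          ((oddPartitions n).filter (fun π => t ≤ π.parts.count d)).card := by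
    refine (Finset.sum_filter_of_ne ?_).symm
    intro t ht hne
    by_contra h
    push_neg at h
    apply hne
    rw [Finset.card_eq_zero, Finset.filter_eq_empty_iff]
    intro π _ hcount
    have h3 := count_mul_le n d π
    have : t * d ≤ n := le_trans (Nat.mul_le_mul_right d hcount) h3
    omega
  rw [h2]
  exact Finset.sum_congr rfl fun t ht => card_filter_count n d t hd (mem_filter.mp ht).2

lemma reindex (n d j : ℕ) (hd0 : 0 < d) :
    ∑ t ∈ (Icc 1 n).filter (fun t => t * d ≤ n), d ^ j * Qodd (n - t * d)
      = ∑ k ∈ (Icc 1 n).filter (fun k => d ∣ k), d ^ j * Qodd (n - k) := by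
  refine Finset.sum_nbij' (i := fun t => t * d) (j := fun k => k / d) ?_ ?_ ?_ ?_ ?_
  · intro t ht
    simp only [mem_filter, mem_Icc] at ht ⊢
    exact ⟨⟨by nlinarith [ht.1.1], ht.2⟩, dvd_mul_left d t⟩
  · intro k hk
    simp only [mem_filter, mem_Icc] at hk ⊢
    obtain ⟨⟨h1, h2⟩, hdvd⟩ := hk
    have hkd : k / d * d = k := Nat.div_mul_cancel hdvd
    refine ⟨⟨(Nat.one_le_div_iff hd0).mpr (Nat.le_of_dvd (by omega) hdvd),
      le_trans (Nat.div_le_self k d) h2⟩, by rw [hkd]; exact h2⟩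
  · intro t ht
    exact Nat.mul_div_cancel t hd0
  · intro k hk
    simp only [mem_filter] at hk
    exact Nat.div_mul_cancel hk.2
  · intro t ht
    rfl

lemma divisor_set_eq (n k : ℕ) (h1 : 1 ≤ k) (h2 : k ≤ n) :
    ((Icc 1 n).filter Odd).filter (· ∣ k) = k.divisors.filter Odd := by
  ext e
  simp only [mem_filter, mem_Icc, Nat.mem_divisors]
  constructor
  · rintro ⟨⟨⟨he1, _⟩, ho⟩, hdvd⟩
    exact ⟨⟨hdvd, by omega⟩, ho⟩
  · rintro ⟨⟨hdvd, hk0⟩, ho⟩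
    exact ⟨⟨⟨Nat.pos_of_dvd_of_pos hdvd h1, le_trans (Nat.le_of_dvd h1 hdvd) h2⟩, ho⟩, hdvd⟩

lemma convolution (j n : ℕ) :
    ∑ π ∈ oddPartitions n, (π.parts.map (· ^ j)).sum
      = ∑ k ∈ Icc 1 n, sigmaOdd j k * Qodd (n - k) := by
  calc ∑ π ∈ oddPartitions n, (π.parts.map (· ^ j)).sum
      = ∑ π ∈ oddPartitions n, ∑ d ∈ Icc 1 n, π.parts.count d * d ^ j :=
        Finset.sum_congr rfl fun π _ => step1 j n π
    _ = ∑ d ∈ Icc 1 n, ∑ π ∈ oddPartitions n, π.parts.count d * d ^ j := Finset.sum_comm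
    _ = ∑ d ∈ Icc 1 n, (∑ π ∈ oddPartitions n, π.parts.count d) * d ^ j := by
        simp [Finset.sum_mul]
    _ = ∑ d ∈ (Icc 1 n).filter Odd, (∑ π ∈ oddPartitions n, π.parts.count d) * d ^ j := by
        refine (Finset.sum_filter_of_ne ?_).symm
        intro d hd hne
        by_contra hodd
        apply hne
        have : ∀ π ∈ oddPartitions n, π.parts.count d = 0 := by
          intro π hπ
          rw [Multiset.count_eq_zero]
          intro hmem
          exact hodd (mem_oddPartitions.mp hπ d hmem)
        rw [Finset.sum_congr rfl this]
        simp
    _ = ∑ d ∈ (Icc 1 n).filter Odd,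
          ∑ t ∈ (Icc 1 n).filter (fun t => t * d ≤ n), d ^ j * Qodd (n - t * d) := by
        refine Finset.sum_congr rfl fun d hd => ?_
        rw [sum_count_eq n d (mem_filter.mp hd).2, Finset.sum_mul]
        exact Finset.sum_congr rfl fun t _ => mul_comm _ _
    _ = ∑ d ∈ (Icc 1 n).filter Odd,
          ∑ k ∈ (Icc 1 n).filter (fun k => d ∣ k), d ^ j * Qodd (n - k) := by
        refine Finset.sum_congr rfl fun d hd => ?_
        exact reindex n d j (mem_filter.mp hd).2.pos
    _ = ∑ d ∈ (Icc 1 n).filter Odd,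
          ∑ k ∈ Icc 1 n, if d ∣ k then d ^ j * Qodd (n - k) else 0 := by
        refine Finset.sum_congr rfl fun d _ => ?_
        rw [Finset.sum_filter]
    _ = ∑ k ∈ Icc 1 n, ∑ d ∈ (Icc 1 n).filter Odd,
          if d ∣ k then d ^ j * Qodd (n - k) else 0 := Finset.sum_comm
    _ = ∑ k ∈ Icc 1 n, sigmaOdd j k * Qodd (n - k) := by
        refine Finset.sum_congr rfl fun k hk => ?_
        rw [mem_Icc] at hk
        rw [← Finset.sum_filter, divisor_set_eq n k hk.1 hk.2, sigmaOdd, Finset.sum_mul]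

def pS (j : ℕ) {n : ℕ} (π : Nat.Partition n) : ℕ := (π.parts.map (· ^ j)).sum


lemma convolution' (j n : ℕ) :
    ∑ π ∈ oddPartitions n, (pS j π : ℚ)
      = ∑ k ∈ Icc 1 n, (sigmaOdd j k : ℚ) * (Qodd (n - k) : ℚ) := by
  have h := congrArg (Nat.cast : ℕ → ℚ) (convolution j n)
  push_cast at h
  convert h using 2 with π _
  rw [pS, Nat.cast_multiset_sum]

lemma cast_pow_sum (n j : ℕ) (π : Nat.Partition n) :
    ((π.parts.map (Nat.cast : ℕ → ℚ)).map (· ^ j)).sum = (pS j π : ℚ) := by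
  rw [pS, Nat.cast_multiset_sum, Multiset.map_map, Multiset.map_map]
  simp [Function.comp_def]

lemma per_pi (n : ℕ) (π : Nat.Partition n) :
    6 * (π.parts.esymm 3 : ℚ) + 3 * n * (pS 2 π : ℚ)
      = (n : ℚ) ^ 3 + 2 * (pS 3 π : ℚ) := by
  have h := newton3 (π.parts.map (Nat.cast : ℕ → ℚ))
  have hsum : (π.parts.map (Nat.cast : ℕ → ℚ)).sum = (n : ℚ) := by
    rw [← Nat.cast_multiset_sum, π.parts_sum]
  rw [hsum, cast_pow_sum, cast_pow_sum] at h
  rw [esymm_cast]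
  linarith


end Aux

theorem e3Q_formula (n : ℕ) (hn : 0 < n) :
    (ejQ 3 n : ℚ) =
      (1 / 6) * ((n : ℚ) ^ 3 * (Qodd n : ℚ) -
        ∑ k ∈ Finset.Icc 1 n,
          (3 * (n : ℚ) * (sigmaOdd 2 k : ℚ) - 2 * (sigmaOdd 3 k : ℚ)) * (Qodd (n - k) : ℚ)) := by
  have hc2 := convolution' 2 n
  have hc3 := convolution' 3 n
  have key : 6 * (ejQ 3 n : ℚ) + 3 * n * ∑ π ∈ oddPartitions n, (pS 2 π : ℚ)
      = (n : ℚ) ^ 3 * (Qodd n : ℚ) + 2 * ∑ π ∈ oddPartitions n, (pS 3 π : ℚ) := by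
    rw [ejQ, Qodd]
    push_cast
    rw [Finset.mul_sum, Finset.mul_sum, Finset.mul_sum, ← Finset.sum_add_distrib]
    rw [Finset.card_eq_sum_ones (oddPartitions n)]
    push_cast
    rw [Finset.mul_sum, ← Finset.sum_add_distrib]
    refine Finset.sum_congr rfl fun π _ => ?_
    have := per_pi n π
    linarith
  have hs : ∑ k ∈ Finset.Icc 1 n,
      (3 * (n : ℚ) * (sigmaOdd 2 k : ℚ) - 2 * (sigmaOdd 3 k : ℚ)) * (Qodd (n - k) : ℚ)
      = 3 * n * ∑ k ∈ Icc 1 n, (sigmaOdd 2 k : ℚ) * (Qodd (n - k) : ℚ)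
        - 2 * ∑ k ∈ Icc 1 n, (sigmaOdd 3 k : ℚ) * (Qodd (n - k) : ℚ) := by
    rw [Finset.mul_sum, Finset.mul_sum, ← Finset.sum_sub_distrib]
    exact Finset.sum_congr rfl fun k _ => by ring
  rw [hs, ← hc2, ← hc3]
  linarith
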